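/- Fix an integer k ≥ 1 and nonnegative integers x, y, z, w; put n = x+y+z+w+k and m = n−k. Let α₁ > ⋯ > α_x, β₁ > ⋯ > β_y, γ₁ > ⋯ > γ_z, δ₁ > ⋯ > δ_w be rational numbers, each lying in ℤ + (k−1)/2, with α_i, γ_j ≥ (k+1)/2 and β_i, δ_j ≤ −(k+1)/2, such that the α's and γ's are pairwise distinct and the β's and δ's are pairwise distinct. Define λ'' on n coordinates as follows: λ'' = α_i − (n+1)/2 + i + #{k' : γ_{k'} > α_i} at the coordinate of α_i; λ'' = x+z−m/2 at each of k 'middle' coordinates; λ'' = β_j + (n−1)/2 + j − y − #{l : δ_l < β_j} at the coordinate of β_j; λ'' = γ_{k'} − (n+1)/2 + k' + #{i : α_i > γ_{k'}} at the coordinate of γ_{k'}; λ'' = δ_l + (n−1)/2 + l − w − #{j : β_j < δ_l} at the coordinate of δ_l. Rank the n coordinates by: the α- and γ-coordinates in decreasing order of α-, γ-values (ranks 1, …, x+z), then the k middle coordinates (ranks x+z+1, …, x+z+k), then the β- and δ-coordinates in decreasing order of β-, δ-values (ranks x+z+k+1, …, n). Then for every pair of coordinates c, c' of consecutive ranks R(c')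 = R(c)+1, one has λ''_c − λ''_{c'} > −1. -/

import Mathlib

namespace Stmt4Aux

open Finset

/-- The rank of `v` in `T`: one plus the number of elements larger than `v`. -/
def rk (T : Finset ℚ) (v : ℚ) : ℕ := (T.filter (fun t => v < t)).card + 1

lemma rk_lt {T : Finset ℚ} {v v' : ℚ} (hv' : v' ∈ T) (h : v < v') :
    rk T v' < rk T v := by
  have hss : T.filter (fun t => v' < t) ⊂ T.filter (fun t => v < t) := by
    refine ⟨Finset.monotone_filter_right T (fun t _ ht => lt_trans h ht), fun hsub => ?_⟩
    have hmem : v' ∈ T.filter (fun t => v < t) := mem_filter.2 ⟨hv', h⟩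
    have := mem_filter.1 (hsub hmem)
    exact lt_irrefl _ this.2
  have := Finset.card_lt_card hss
  simp only [rk]
  omega

lemma rk_bounds {T : Finset ℚ} {v : ℚ} (hv : v ∈ T) :
    1 ≤ rk T v ∧ rk T v ≤ T.card := by
  refine ⟨by simp [rk], ?_⟩
  have hsub : T.filter (fun t => v < t) ⊆ T.erase v := by
    intro t ht
    rw [mem_filter] at ht
    exact mem_erase.2 ⟨(ne_of_gt ht.2), ht.1⟩
  have h1 := Finset.card_le_card hsub
  have h2 := Finset.card_erase_of_mem hv
  have h3 : 1 ≤ T.card := Finset.card_pos.2 ⟨v, hv⟩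
  simp only [rk]
  omega

lemma rk_injOn {T : Finset ℚ} : Set.InjOn (rk T) T := by
  intro v hv v' hv' h
  rw [Finset.mem_coe] at hv hv'
  rcases lt_trichotomy v v' with hlt | he | hlt
  · have := rk_lt hv' hlt; omega
  · exact he
  · have := rk_lt hv hlt; omega

lemma rk_surjOn (T : Finset ℚ) (R : ℕ) (h1 : 1 ≤ R) (h2 : R ≤ T.card) :
    ∃ v ∈ T, rk T v = R := by
  have himg : T.image (rk T) = Finset.Icc 1 T.card := by
    apply Finset.eq_of_subset_of_card_le
    · intro r hr
      obtain ⟨v, hv, rfl⟩ := mem_image.1 hr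
      exact mem_Icc.2 (rk_bounds hv)
    · rw [Nat.card_Icc, Finset.card_image_of_injOn rk_injOn]
      omega
  have : R ∈ T.image (rk T) := himg ▸ mem_Icc.2 ⟨h1, h2⟩
  obtain ⟨v, hv, hrv⟩ := mem_image.1 this
  exact ⟨v, hv, hrv⟩

lemma rk_anti {T : Finset ℚ} {v v' : ℚ} (hv : v ∈ T) (hv' : v' ∈ T)
    (h : rk T v < rk T v') : v' < v := by
  rcases lt_trichotomy v' v with h1 | rfl | h1
  · exact h1
  · exact absurd h (lt_irrefl _)
  · exact absurd h (not_lt.2 (le_of_lt (rk_lt hv' h1)))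

lemma count_gt {f : ℕ → ℚ} {x i : ℕ}
    (hf : ∀ i j, 1 ≤ i → i < j → j ≤ x → f j < f i)
    (h1 : 1 ≤ i) (h2 : i ≤ x) :
    ((Finset.Icc 1 x).filter (fun i' => f i < f i')).card = i - 1 := by
  have he : (Finset.Icc 1 x).filter (fun i' => f i < f i') = Finset.Icc 1 (i - 1) := by
    ext i'
    simp only [mem_filter, mem_Icc]
    constructor
    · rintro ⟨⟨ha, hb⟩, hc⟩
      refine ⟨ha, ?_⟩
      by_contra hcon
      push_neg at hcon
      have hii' : i ≤ i' := by omega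
      rcases eq_or_lt_of_le hii' with rfl | hlt
      · exact lt_irrefl _ hc
      · exact absurd hc (not_lt.2 (le_of_lt (hf i i' h1 hlt hb)))
    · rintro ⟨ha, hb⟩
      exact ⟨⟨ha, by omega⟩, hf i' i ha (by omega) h2⟩
  rw [he, Nat.card_Icc]; omega

lemma injOn_anti {f : ℕ → ℚ} {x : ℕ}
    (hf : ∀ i j, 1 ≤ i → i < j → j ≤ x → f j < f i) :
    Set.InjOn f (Finset.Icc 1 x) := by
  intro i hi j hj heq
  simp only [Finset.coe_Icc, Set.mem_Icc] at hi hj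
  by_contra hne
  rcases lt_or_gt_of_ne hne with h | h
  · have := hf i j hi.1 h hj.2; linarith
  · have := hf j i hj.1 h hi.2; linarith

lemma count_split {f : ℕ → ℚ} {w : ℕ} {c : ℚ}
    (hne : ∀ l, 1 ≤ l → l ≤ w → f l ≠ c) :
    ((Finset.Icc 1 w).filter (fun l => f l < c)).card
      + ((Finset.Icc 1 w).filter (fun l => c < f l)).card = w := by
  have h2 : (Finset.Icc 1 w).filter (fun l => c < f l)
      = (Finset.Icc 1 w).filter (fun l => ¬ f l < c) := by
    apply Finset.filter_congr
    intro l hl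
    simp only [mem_Icc] at hl
    constructor
    · intro h; exact not_lt.2 (le_of_lt h)
    · intro h
      exact lt_of_le_of_ne (not_lt.1 h) (Ne.symm (hne l hl.1 hl.2))
  rw [h2, Finset.card_filter_add_card_filter_not, Nat.card_Icc]; omega

end Stmt4Aux

/-- The verification that `λ''` is in the good range in the reduction of
Theorem 4.1(2) to Theorem 4.1(1): if `Λ R` denotes the value of `λ''` at the
coordinate of rank `R` (the rank of a coordinate within a block sorted in
decreasing order of values being one more than the number of coordinates of
that block with strictly larger value), then consecutive values satisfy
`Λ R − Λ (R+1) > −1`. -/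
theorem stmt4 (k x y z w n m : ℕ) (hk : 1 ≤ k)
    (hn : n = x + y + z + w + k) (hm : m = n - k)
    (α β γ δ : ℕ → ℚ)
    (hα : ∀ i j, 1 ≤ i → i < j → j ≤ x → α j < α i)
    (hβ : ∀ i j, 1 ≤ i → i < j → j ≤ y → β j < β i)
    (hγ : ∀ i j, 1 ≤ i → i < j → j ≤ z → γ j < γ i)
    (hδ : ∀ i j, 1 ≤ i → i < j → j ≤ w → δ j < δ i)
    (hαint : ∀ i, 1 ≤ i → i ≤ x → ∃ t : ℤ, α i = t + ((k : ℚ) - 1) / 2)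
    (hβint : ∀ i, 1 ≤ i → i ≤ y → ∃ t : ℤ, β i = t + ((k : ℚ) - 1) / 2)
    (hγint : ∀ i, 1 ≤ i → i ≤ z → ∃ t : ℤ, γ i = t + ((k : ℚ) - 1) / 2)
    (hδint : ∀ i, 1 ≤ i → i ≤ w → ∃ t : ℤ, δ i = t + ((k : ℚ) - 1) / 2)
    (hαlb : ∀ i, 1 ≤ i → i ≤ x → ((k : ℚ) + 1) / 2 ≤ α i)
    (hγlb : ∀ i, 1 ≤ i → i ≤ z → ((k : ℚ) + 1) / 2 ≤ γ i)
    (hβub : ∀ i, 1 ≤ i → i ≤ y → β i ≤ -(((k : ℚ) + 1) / 2))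
    (hδub : ∀ i, 1 ≤ i → i ≤ w → δ i ≤ -(((k : ℚ) + 1) / 2))
    (hαγ : ∀ i j, 1 ≤ i → i ≤ x → 1 ≤ j → j ≤ z → α i ≠ γ j)
    (hβδ : ∀ i j, 1 ≤ i → i ≤ y → 1 ≤ j → j ≤ w → β i ≠ δ j)
    (Λ : ℕ → ℚ)
    (hΛα : ∀ i, 1 ≤ i → i ≤ x →
      Λ (((Finset.Icc 1 x).filter fun i' => α i < α i').card
          + ((Finset.Icc 1 z).filter fun j => α i < γ j).card + 1)
        = α i - ((n : ℚ) + 1) / 2 + i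
          + (((Finset.Icc 1 z).filter fun j => α i < γ j).card : ℚ))
    (hΛγ : ∀ j, 1 ≤ j → j ≤ z →
      Λ (((Finset.Icc 1 z).filter fun j' => γ j < γ j').card
          + ((Finset.Icc 1 x).filter fun i => γ j < α i).card + 1)
        = γ j - ((n : ℚ) + 1) / 2 + j
          + (((Finset.Icc 1 x).filter fun i => γ j < α i).card : ℚ))
    (hΛmid : ∀ j, 1 ≤ j → j ≤ k →
      Λ (x + z + j) = (x : ℚ) + (z : ℚ) - (m : ℚ) / 2)
    (hΛβ : ∀ j, 1 ≤ j → j ≤ y →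
      Λ (x + z + k + (((Finset.Icc 1 y).filter fun j' => β j < β j').card
          + ((Finset.Icc 1 w).filter fun l => β j < δ l).card + 1))
        = β j + ((n : ℚ) - 1) / 2 + j - y
          - (((Finset.Icc 1 w).filter fun l => δ l < β j).card : ℚ))
    (hΛδ : ∀ l, 1 ≤ l → l ≤ w →
      Λ (x + z + k + (((Finset.Icc 1 w).filter fun l' => δ l < δ l').card
          + ((Finset.Icc 1 y).filter fun j => δ l < β j).card + 1))
        = δ l + ((n : ℚ) - 1) / 2 + l - w
          - (((Finset.Icc 1 y).filter fun j => β j < δ l).card : ℚ)) :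
    ∀ R, 1 ≤ R → R < n → Λ R - Λ (R + 1) > -1 := by
  classical
  open Finset Stmt4Aux in
  -- basic numerical facts
  have hmk : m + k = n := by omega
  have hmQ : (m : ℚ) = (n : ℚ) - (k : ℚ) := by
    have : ((m + k : ℕ) : ℚ) = (n : ℚ) := by exact_mod_cast congrArg (Nat.cast (R := ℚ)) hmk
    push_cast at this
    linarith
  have hxyzw : (x : ℚ) + (y : ℚ) + (z : ℚ) + (w : ℚ) = (m : ℚ) := by
    have h : x + y + z + w = m := by omega
    exact_mod_cast congrArg (Nat.cast (R := ℚ)) h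
  set Ttop : Finset ℚ := ((Finset.Icc 1 x).image α) ∪ ((Finset.Icc 1 z).image γ) with hTtop
  set Tbot : Finset ℚ := ((Finset.Icc 1 y).image β) ∪ ((Finset.Icc 1 w).image δ) with hTbot
  have hdisj_top : Disjoint ((Finset.Icc 1 x).image α) ((Finset.Icc 1 z).image γ) := by
    rw [Finset.disjoint_left]
    rintro v hv1 hv2
    obtain ⟨i, hi, rfl⟩ := Finset.mem_image.1 hv1
    obtain ⟨j, hj, hji⟩ := Finset.mem_image.1 hv2
    rw [Finset.mem_Icc] at hi hj
    exact hαγ i j hi.1 hi.2 hj.1 hj.2 hji.symm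
  have hdisj_bot : Disjoint ((Finset.Icc 1 y).image β) ((Finset.Icc 1 w).image δ) := by
    rw [Finset.disjoint_left]
    rintro v hv1 hv2
    obtain ⟨i, hi, rfl⟩ := Finset.mem_image.1 hv1
    obtain ⟨j, hj, hji⟩ := Finset.mem_image.1 hv2
    rw [Finset.mem_Icc] at hi hj
    exact hβδ i j hi.1 hi.2 hj.1 hj.2 hji.symm
  have hcard_top : Ttop.card = x + z := by
    rw [hTtop, Finset.card_union_of_disjoint hdisj_top,
      Finset.card_image_of_injOn (injOn_anti hα),
      Finset.card_image_of_injOn (injOn_anti hγ), Nat.card_Icc, Nat.card_Icc]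
    omega
  have hcard_bot : Tbot.card = y + w := by
    rw [hTbot, Finset.card_union_of_disjoint hdisj_bot,
      Finset.card_image_of_injOn (injOn_anti hβ),
      Finset.card_image_of_injOn (injOn_anti hδ), Nat.card_Icc, Nat.card_Icc]
    omega
  -- rank in a union of two images splits as a sum of counts
  have hrk_top : ∀ v : ℚ, rk Ttop v
      = ((Finset.Icc 1 x).filter (fun i => v < α i)).card
        + ((Finset.Icc 1 z).filter (fun j => v < γ j)).card + 1 := by
    intro v
    rw [hTtop]
    unfold Stmt4Aux.rk
    rw [Finset.filter_union,
      Finset.card_union_of_disjoint (Finset.disjoint_filter_filter hdisj_top),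
      Finset.filter_image, Finset.filter_image,
      Finset.card_image_of_injOn
        ((injOn_anti hα).mono (Finset.coe_subset.2 (Finset.filter_subset _ _))),
      Finset.card_image_of_injOn
        ((injOn_anti hγ).mono (Finset.coe_subset.2 (Finset.filter_subset _ _)))]
  have hrk_bot : ∀ v : ℚ, rk Tbot v
      = ((Finset.Icc 1 y).filter (fun j => v < β j)).card
        + ((Finset.Icc 1 w).filter (fun l => v < δ l)).card + 1 := by
    intro v
    rw [hTbot]
    unfold Stmt4Aux.rk
    rw [Finset.filter_union,
      Finset.card_union_of_disjoint (Finset.disjoint_filter_filter hdisj_bot),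
      Finset.filter_image, Finset.filter_image,
      Finset.card_image_of_injOn
        ((injOn_anti hβ).mono (Finset.coe_subset.2 (Finset.filter_subset _ _))),
      Finset.card_image_of_injOn
        ((injOn_anti hδ).mono (Finset.coe_subset.2 (Finset.filter_subset _ _)))]
  -- the value of Λ at a top-block rank
  have hval_top : ∀ v ∈ Ttop,
      Λ (rk Ttop v) = v - ((n : ℚ) + 1) / 2 + (rk Ttop v : ℚ) := by
    intro v hv
    rw [hTtop, Finset.mem_union] at hv
    rcases hv with hv | hv
    · obtain ⟨i, hi, rfl⟩ := Finset.mem_image.1 hv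
      rw [Finset.mem_Icc] at hi
      have hc : ((Finset.Icc 1 x).filter (fun i' => α i < α i')).card = i - 1 :=
        count_gt hα hi.1 hi.2
      have he := hΛα i hi.1 hi.2
      rw [hc] at he
      rw [hrk_top (α i), hc, he]
      have h1 : ((i - 1 : ℕ) : ℚ) = (i : ℚ) - 1 := by
        have := hi.1; push_cast [Nat.cast_sub this]; ring
      push_cast [h1]
      ring
    · obtain ⟨j, hj, rfl⟩ := Finset.mem_image.1 hv
      rw [Finset.mem_Icc] at hj
      have hc : ((Finset.Icc 1 z).filter (fun j' => γ j < γ j')).card = j - 1 :=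
        count_gt hγ hj.1 hj.2
      have he := hΛγ j hj.1 hj.2
      rw [hc] at he
      have hcomm : ((Finset.Icc 1 x).filter (fun i => γ j < α i)).card
          + ((Finset.Icc 1 z).filter (fun j' => γ j < γ j')).card + 1
          = ((Finset.Icc 1 z).filter (fun j' => γ j < γ j')).card
            + ((Finset.Icc 1 x).filter (fun i => γ j < α i)).card + 1 := by omega
      rw [hrk_top (γ j), hc] at *
      rw [hcomm, hc, he]
      have h1 : ((j - 1 : ℕ) : ℚ) = (j : ℚ) - 1 := by
        have := hj.1; push_cast [Nat.cast_sub this]; ring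
      push_cast [h1]
      ring
  -- the value of Λ at a bottom-block rank
  have hval_bot : ∀ v ∈ Tbot,
      Λ (x + z + k + rk Tbot v)
        = v + ((n : ℚ) - 1) / 2 + (rk Tbot v : ℚ) - (y : ℚ) - (w : ℚ) := by
    intro v hv
    rw [hTbot, Finset.mem_union] at hv
    rcases hv with hv | hv
    · obtain ⟨j, hj, rfl⟩ := Finset.mem_image.1 hv
      rw [Finset.mem_Icc] at hj
      have hc : ((Finset.Icc 1 y).filter (fun j' => β j < β j')).card = j - 1 :=
        count_gt hβ hj.1 hj.2
      have hsplit : ((Finset.Icc 1 w).filter (fun l => δ l < β j)).card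
          + ((Finset.Icc 1 w).filter (fun l => β j < δ l)).card = w :=
        count_split (fun l hl1 hl2 => (hβδ j l hj.1 hj.2 hl1 hl2).symm)
      have he := hΛβ j hj.1 hj.2
      rw [hc] at he
      rw [hrk_bot (β j), hc, he]
      have h1 : ((j - 1 : ℕ) : ℚ) = (j : ℚ) - 1 := by
        have := hj.1; push_cast [Nat.cast_sub this]; ring
      have h2 : (((Finset.Icc 1 w).filter (fun l => δ l < β j)).card : ℚ)
          + (((Finset.Icc 1 w).filter (fun l => β j < δ l)).card : ℚ) = (w : ℚ) := by
        exact_mod_cast congrArg (Nat.cast (R := ℚ)) hsplit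
      push_cast [h1]
      push_cast at h2
      linarith
    · obtain ⟨l, hl, rfl⟩ := Finset.mem_image.1 hv
      rw [Finset.mem_Icc] at hl
      have hc : ((Finset.Icc 1 w).filter (fun l' => δ l < δ l')).card = l - 1 :=
        count_gt hδ hl.1 hl.2
      have hsplit : ((Finset.Icc 1 y).filter (fun j => β j < δ l)).card
          + ((Finset.Icc 1 y).filter (fun j => δ l < β j)).card = y :=
        count_split (fun j hj1 hj2 => hβδ j l hj1 hj2 hl.1 hl.2)
      have he := hΛδ l hl.1 hl.2
      have hcomm : x + z + k + (((Finset.Icc 1 y).filter (fun j => δ l < β j)).card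
          + ((Finset.Icc 1 w).filter (fun l' => δ l < δ l')).card + 1)
          = x + z + k + (((Finset.Icc 1 w).filter (fun l' => δ l < δ l')).card
            + ((Finset.Icc 1 y).filter (fun j => δ l < β j)).card + 1) := by omega
      rw [hc] at he
      rw [hc] at hcomm
      rw [hrk_bot (δ l), hc, hcomm, he]
      have h1 : ((l - 1 : ℕ) : ℚ) = (l : ℚ) - 1 := by
        have := hl.1; push_cast [Nat.cast_sub this]; ring
      have h2 : (((Finset.Icc 1 y).filter (fun j => β j < δ l)).card : ℚ)
          + (((Finset.Icc 1 y).filter (fun j => δ l < β j)).card : ℚ) = (y : ℚ) := by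
        exact_mod_cast congrArg (Nat.cast (R := ℚ)) hsplit
      push_cast [h1]
      push_cast at h2
      linarith
  -- properties of the top and bottom values
  have hprop_top : ∀ v ∈ Ttop,
      ((k : ℚ) + 1) / 2 ≤ v ∧ ∃ t : ℤ, v = t + ((k : ℚ) - 1) / 2 := by
    intro v hv
    rw [hTtop, Finset.mem_union] at hv
    rcases hv with hv | hv
    · obtain ⟨i, hi, rfl⟩ := Finset.mem_image.1 hv
      rw [Finset.mem_Icc] at hi
      exact ⟨hαlb i hi.1 hi.2, hαint i hi.1 hi.2⟩
    · obtain ⟨j, hj, rfl⟩ := Finset.mem_image.1 hv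
      rw [Finset.mem_Icc] at hj
      exact ⟨hγlb j hj.1 hj.2, hγint j hj.1 hj.2⟩
  have hprop_bot : ∀ v ∈ Tbot,
      v ≤ -(((k : ℚ) + 1) / 2) ∧ ∃ t : ℤ, v = t + ((k : ℚ) - 1) / 2 := by
    intro v hv
    rw [hTbot, Finset.mem_union] at hv
    rcases hv with hv | hv
    · obtain ⟨j, hj, rfl⟩ := Finset.mem_image.1 hv
      rw [Finset.mem_Icc] at hj
      exact ⟨hβub j hj.1 hj.2, hβint j hj.1 hj.2⟩
    · obtain ⟨l, hl, rfl⟩ := Finset.mem_image.1 hv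
      rw [Finset.mem_Icc] at hl
      exact ⟨hδub l hl.1 hl.2, hδint l hl.1 hl.2⟩
  -- two distinct values in ℤ + (k-1)/2 differ by at least 1
  have gap : ∀ v v' : ℚ, (∃ t : ℤ, v = t + ((k : ℚ) - 1) / 2)
      → (∃ t : ℤ, v' = t + ((k : ℚ) - 1) / 2) → v' < v → 1 ≤ v - v' := by
    rintro v v' ⟨t, rfl⟩ ⟨t', rfl⟩ h
    have ht : t' < t := by
      have : (t' : ℚ) < t := by linarith
      exact_mod_cast this
    have h1 : (t' : ℚ) + 1 ≤ t := by exact_mod_cast ht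
    linarith
  -- main case analysis on the rank R
  intro R hR1 hRn
  by_cases h1 : R + 1 ≤ x + z
  · -- both ranks in the top block
    obtain ⟨v, hv, hrkv⟩ := rk_surjOn Ttop R hR1 (by rw [hcard_top]; omega)
    obtain ⟨v', hv', hrkv'⟩ :=
      rk_surjOn Ttop (R + 1) (by omega) (by rw [hcard_top]; omega)
    have hlt : v' < v := rk_anti hv hv' (by rw [hrkv, hrkv']; omega)
    have hg := gap v v' (hprop_top v hv).2 (hprop_top v' hv').2 hlt
    have e1 := hval_top v hv; rw [hrkv] at e1
    have e2 := hval_top v' hv'; rw [hrkv'] at e2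
    rw [e1, e2]
    push_cast
    linarith
  · by_cases h2 : R ≤ x + z
    · -- R = x + z : top block to middle block
      have hR : R = x + z := by omega
      obtain ⟨v, hv, hrkv⟩ := rk_surjOn Ttop R hR1 (by rw [hcard_top]; omega)
      have e1 := hval_top v hv; rw [hrkv] at e1
      have e2 := hΛmid 1 le_rfl hk
      have hRe : R + 1 = x + z + 1 := by omega
      have hvlb := (hprop_top v hv).1
      have hRQ : (R : ℚ) = (x : ℚ) + (z : ℚ) := by exact_mod_cast congrArg (Nat.cast (R := ℚ)) hR
      rw [e1, hRe, e2, hRQ]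
      linarith
    · by_cases h3 : R + 1 ≤ x + z + k
      · -- both ranks in the middle block
        have e1 := hΛmid (R - (x + z)) (by omega) (by omega)
        have e2 := hΛmid (R + 1 - (x + z)) (by omega) (by omega)
        have hq1 : x + z + (R - (x + z)) = R := by omega
        have hq2 : x + z + (R + 1 - (x + z)) = R + 1 := by omega
        rw [hq1] at e1
        rw [hq2] at e2
        rw [e1, e2]
        norm_num
      · by_cases h4 : R ≤ x + z + k
        · -- R = x + z + k : middle block to bottom block
          have hR : R = x + z + k := by omega
          have e1 := hΛmid k hk le_rfl
          rw [show x + z + k = R from hR.symm] at e1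
          have hyw : 1 ≤ y + w := by omega
          obtain ⟨v, hv, hrkv⟩ := rk_surjOn Tbot 1 le_rfl (by rw [hcard_bot]; omega)
          have e2 := hval_bot v hv; rw [hrkv] at e2
          rw [show x + z + k + 1 = R + 1 by omega] at e2
          rw [e1, e2]
          have hub := (hprop_bot v hv).1
          push_cast
          linarith
        · -- both ranks in the bottom block
          have hS1 : 1 ≤ R - (x + z + k) := by omega
          set S := R - (x + z + k) with hS
          have hS2 : S + 1 ≤ y + w := by omega
          obtain ⟨v, hv, hrkv⟩ := rk_surjOn Tbot S hS1 (by rw [hcard_bot]; omega)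
          obtain ⟨v', hv', hrkv'⟩ :=
            rk_surjOn Tbot (S + 1) (by omega) (by rw [hcard_bot]; omega)
          have hlt : v' < v := rk_anti hv hv' (by rw [hrkv, hrkv']; omega)
          have hg := gap v v' (hprop_bot v hv).2 (hprop_bot v' hv').2 hlt
          have e1 := hval_bot v hv; rw [hrkv] at e1
          have e2 := hval_bot v' hv'; rw [hrkv'] at e2
          rw [show x + z + k + S = R by omega] at e1
          rw [show x + z + k + (S + 1) = R + 1 by omega] at e2
          rw [e1, e2]
          push_cast
          linarith
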